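/- arXiv:2106.05065 — 9 statements merged into one kernel-verified Lean document; each statement's English description precedes it below -/
import Mathlib

section
/- Let n be a positive integer, P an n×n row-stochastic matrix (nonnegative entries, each row summing to 1), and π ∈ ℝ^n a nonnegative vector with πᵀP = πᵀ. Fix u ∈ Fin n and let Q be the matrix obtained from P by replacing its u-th row with the standard basis vector e_u. Then the sequence k ↦ πᵀ Q^k e_u is concave: for every k ∈ ℕ, πᵀ Q^{k+2} e_u − 2 πᵀ Q^{k+1} e_u + πᵀ Q^k e_u ≤ 0. -/
open Matrix

/-- For a row-stochastic `P`, a nonnegative left-fixed vector `π`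
(`πᵀP = πᵀ`), and `Q` obtained from `P` by replacing row `u` with `e_u`, the
sequence `k ↦ πᵀ Q^k e_u` is concave. -/
theorem stmt_1 (n : ℕ) (hn : 0 < n)
    (P : Matrix (Fin n) (Fin n) ℝ)
    (hPnn : ∀ i j, 0 ≤ P i j) (hProw : ∀ i, ∑ j, P i j = 1)
    (pv : Fin n → ℝ) (hpv : ∀ i, 0 ≤ pv i)
    (hstat : Matrix.vecMul pv P = pv)
    (u : Fin n) (k : ℕ) :
    pv ⬝ᵥ (((Matrix.updateRow P u (Pi.single u 1)) ^ (k + 2)) *ᵥ Pi.single u 1)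
      - 2 * (pv ⬝ᵥ (((Matrix.updateRow P u (Pi.single u 1)) ^ (k + 1)) *ᵥ Pi.single u 1))
      + pv ⬝ᵥ (((Matrix.updateRow P u (Pi.single u 1)) ^ k) *ᵥ Pi.single u 1) ≤ 0 := by
  set e : Fin n → ℝ := Pi.single u 1 with he
  set Q : Matrix (Fin n) (Fin n) ℝ := Matrix.updateRow P u e with hQ
  have henn : ∀ j, 0 ≤ e j := by
    intro j
    rw [he, Pi.single_apply]
    split <;> norm_num
  have hQnn : ∀ i j, 0 ≤ Q i j := by
    intro i j
    by_cases hi : i = u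
    · rw [hQ, hi, Matrix.updateRow_self]; exact henn j
    · rw [hQ, Matrix.updateRow_ne hi]; exact hPnn i j
  -- row u of Q acts as coordinate projection
  have hQu : ∀ x : Fin n → ℝ, (Q *ᵥ x) u = x u := by
    intro x
    rw [hQ]
    simp [Matrix.mulVec, Matrix.updateRow_self, he, dotProduct,
      Pi.single_apply]
  have hfix : ∀ m : ℕ, ((Q ^ m) *ᵥ e) u = 1 := by
    intro m
    induction m with
    | zero => simp [he]
    | succ m ih =>
      rw [pow_succ', ← Matrix.mulVec_mulVec, hQu, ih]
  have hmvle : ∀ x y : Fin n → ℝ, (∀ j, x j ≤ y j) → ∀ i, (Q *ᵥ x) i ≤ (Q *ᵥ y) i := by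
    intro x y hxy i
    simp only [Matrix.mulVec, dotProduct]
    exact Finset.sum_le_sum fun j _ => mul_le_mul_of_nonneg_left (hxy j) (hQnn i j)
  -- monotonicity of iterates
  have hmono : ∀ m : ℕ, ∀ i, ((Q ^ m) *ᵥ e) i ≤ ((Q ^ (m + 1)) *ᵥ e) i := by
    intro m
    induction m with
    | zero =>
      intro i
      rcases eq_or_ne i u with hi | hi
      · subst hi
        simp only [pow_zero, Matrix.one_mulVec]
        rw [hfix 1, he]; simp
      · simp only [pow_zero, Matrix.one_mulVec]
        have h0 : e i = 0 := by simp [he, Pi.single_apply, hi]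
        rw [h0, zero_add, pow_one]
        simp only [Matrix.mulVec, dotProduct]
        exact Finset.sum_nonneg fun j _ => mul_nonneg (hQnn i j) (henn j)
    | succ m ih =>
      intro i
      have h1 : Q *ᵥ ((Q ^ m) *ᵥ e) = (Q ^ (m + 1)) *ᵥ e := by
        rw [Matrix.mulVec_mulVec, ← pow_succ']
      have h2 : Q *ᵥ ((Q ^ (m + 1)) *ᵥ e) = (Q ^ (m + 2)) *ᵥ e := by
        rw [Matrix.mulVec_mulVec, ← pow_succ']
      rw [← h1, ← h2]
      exact hmvle _ _ ih i
  -- the increment vector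
  set a : Fin n → ℝ := (Q ^ k) *ᵥ e with ha
  set b : Fin n → ℝ := (Q ^ (k + 1)) *ᵥ e with hb
  set d : Fin n → ℝ := fun j => b j - a j with hd
  have hdnn : ∀ j, 0 ≤ d j := fun j => sub_nonneg.mpr (hmono k j)
  have hdu : d u = 0 := by
    simp [hd, hb, ha, hfix]
  have hQd : ∀ i, ((Q ^ (k + 2)) *ᵥ e) i - b i = (Q *ᵥ d) i := by
    intro i
    have h2 : (Q ^ (k + 2)) *ᵥ e = Q *ᵥ b := by
      rw [hb, Matrix.mulVec_mulVec, ← pow_succ']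
    have h1 : b = Q *ᵥ a := by
      rw [ha, Matrix.mulVec_mulVec, ← pow_succ']
    rw [h2, h1]
    simp only [Matrix.mulVec, dotProduct, hd, h1]
    rw [← Finset.sum_sub_distrib]
    congr 1
    ext j
    ring
  -- rewrite goal as pv ⬝ (Q *ᵥ d) - pv ⬝ d ≤ 0
  have hgoal : pv ⬝ᵥ ((Q ^ (k + 2)) *ᵥ e) - 2 * (pv ⬝ᵥ b) + pv ⬝ᵥ a
      = pv ⬝ᵥ (Q *ᵥ d) - pv ⬝ᵥ d := by
    simp only [dotProduct]
    have : ∀ i, (Q *ᵥ d) i = ((Q ^ (k + 2)) *ᵥ e) i - b i := fun i => (hQd i).symm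
    rw [show (∑ i, pv i * (Q *ᵥ d) i) = ∑ i, pv i * (((Q ^ (k + 2)) *ᵥ e) i - b i) by
      exact Finset.sum_congr rfl fun i _ => by rw [this i]]
    simp only [hd]
    rw [Finset.mul_sum]
    rw [← Finset.sum_sub_distrib, ← Finset.sum_sub_distrib, ← Finset.sum_add_distrib]
    apply Finset.sum_congr rfl
    intro i _
    ring
  show pv ⬝ᵥ ((Q ^ (k + 2)) *ᵥ e) - 2 * (pv ⬝ᵥ b) + pv ⬝ᵥ a ≤ 0
  rw [hgoal]
  -- key computation: pv ᵥ* Q j = pv j - pv u * P u j + pv u * e j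
  have hvm : ∀ j, Matrix.vecMul pv Q j = pv j - pv u * P u j + pv u * e j := by
    intro j
    have hP : Matrix.vecMul pv P j = pv j := congrFun hstat j
    have : Matrix.vecMul pv Q j - Matrix.vecMul pv P j = pv u * e j - pv u * P u j := by
      simp only [Matrix.vecMul, dotProduct]
      rw [← Finset.sum_sub_distrib]
      rw [Finset.sum_eq_single u]
      · rw [hQ, Matrix.updateRow_self]
      · intro i _ hi
        rw [hQ, Matrix.updateRow_ne hi]; ring
      · intro h; exact absurd (Finset.mem_univ u) h
    linarith
  rw [Matrix.dotProduct_mulVec]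
  have hexp : Matrix.vecMul pv Q ⬝ᵥ d
      = pv ⬝ᵥ d - pv u * (∑ j, P u j * d j) + pv u * d u := by
    simp only [dotProduct]
    rw [Finset.mul_sum]
    rw [← Finset.sum_sub_distrib]
    have hdu' : pv u * d u = ∑ j, pv u * e j * d j := by
      rw [Finset.sum_eq_single u]
      · simp [he]
      · intro i _ hi; simp [he, Pi.single_apply, hi]
      · intro h; exact absurd (Finset.mem_univ u) h
    rw [hdu', ← Finset.sum_add_distrib]
    apply Finset.sum_congr rfl
    intro j _
    rw [hvm j]
    ring
  rw [hexp, hdu]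
  have hsum : 0 ≤ ∑ j, P u j * d j :=
    Finset.sum_nonneg fun j _ => mul_nonneg (hPnn u j) (hdnn j)
  have := mul_nonneg (hpv u) hsum
  linarith
end

section
/- Let m be a positive integer, V a finite set, σ : V → ℝ with σ_u ≥ 0 for all u, and for each i ∈ Fin m and u ∈ V let P_{i,u} : ℕ → ℝ be a nondecreasing function with 0 ≤ P_{i,u}(k) ≤ 1 for all k. Define r : (Fin m → ℕ) → ℝ by r(k) = Σ_{u∈V} σ_u (1 − Π_{i∈Fin m} (1 − P_{i,u}(k_i))). Then r is monotone (r(x) ≤ r(y) whenever x ≤ y coordinatewise) and submodular over the integer lattice (r(x ⊔ y) + r(x ⊓ y) ≤ r(x) + r(y) for all x, y, where ⊔ and ⊓ denote the coordinatewise maximum and minimum). -/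
private lemma step_aux (p q A B M X : ℝ) (hp : 0 ≤ p) (hq : 0 ≤ q)
    (hMB : M ≤ B) (hMA : M ≤ A) (hXA : A ≤ X) (hXB : B ≤ X)
    (hsum : A + B ≤ M + X) :
    p * A + q * B ≤ min p q * M + max p q * X := by
  rcases le_total p q with h | h
  · rw [min_eq_left h, max_eq_right h]
    nlinarith
  · rw [min_eq_right h, max_eq_left h]
    nlinarith

private lemma prod_inf_sup {ι : Type*} (s : Finset ι) (a b : ι → ℝ)
    (ha : ∀ i, 0 ≤ a i) (hb : ∀ i, 0 ≤ b i) :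
    ∏ i ∈ s, a i + ∏ i ∈ s, b i ≤
      ∏ i ∈ s, min (a i) (b i) + ∏ i ∈ s, max (a i) (b i) := by
  classical
  induction s using Finset.cons_induction with
  | empty => simp
  | cons j s hj ih =>
    simp only [Finset.prod_cons]
    have hm : ∀ i, 0 ≤ min (a i) (b i) := fun i => le_min (ha i) (hb i)
    have hM : (0:ℝ) ≤ ∏ i ∈ s, min (a i) (b i) := Finset.prod_nonneg fun i _ => hm i
    exact step_aux (a j) (b j) _ _ _ _ (ha j) (hb j)
      (Finset.prod_le_prod (fun i _ => hm i) (fun i _ => min_le_right _ _))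
      (Finset.prod_le_prod (fun i _ => hm i) (fun i _ => min_le_left _ _))
      (Finset.prod_le_prod (fun i _ => ha i) (fun i _ => le_max_left _ _))
      (Finset.prod_le_prod (fun i _ => hb i) (fun i _ => le_max_right _ _)) ih

/-- The reward function
`r k = Σ_u σ_u (1 − Π_i (1 − P_{i,u}(k_i)))` is monotone and submodular over
the integer lattice, provided each `P_{i,u}` is nondecreasing and `[0,1]`-valued
and the weights `σ` are nonnegative. -/
theorem stmt_2 (m : ℕ) (hm : 0 < m) (V : Type*) [Fintype V]
    (σ : V → ℝ) (hσ : ∀ u, 0 ≤ σ u)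
    (P : Fin m → V → ℕ → ℝ)
    (hPmono : ∀ i u, Monotone (P i u))
    (hPbd : ∀ i u k, 0 ≤ P i u k ∧ P i u k ≤ 1)
    (r : (Fin m → ℕ) → ℝ)
    (hr : ∀ k, r k = ∑ u, σ u * (1 - ∏ i, (1 - P i u (k i)))) :
    Monotone r ∧ ∀ x y : Fin m → ℕ, r (x ⊔ y) + r (x ⊓ y) ≤ r x + r y := by
  have hq0 : ∀ i u k, (0:ℝ) ≤ 1 - P i u k := fun i u k => by
    linarith [(hPbd i u k).2]
  constructor
  · intro x y hxy
    rw [hr x, hr y]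
    apply Finset.sum_le_sum
    intro u _
    apply mul_le_mul_of_nonneg_left _ (hσ u)
    have : ∏ i, (1 - P i u (y i)) ≤ ∏ i, (1 - P i u (x i)) :=
      Finset.prod_le_prod (fun i _ => hq0 i u (y i))
        (fun i _ => by linarith [hPmono i u (hxy i)])
    linarith
  · intro x y
    rw [hr x, hr y, hr (x ⊔ y), hr (x ⊓ y)]
    rw [← Finset.sum_add_distrib, ← Finset.sum_add_distrib]
    apply Finset.sum_le_sum
    intro u _
    rw [← mul_add, ← mul_add]
    apply mul_le_mul_of_nonneg_left _ (hσ u)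
    have key := prod_inf_sup Finset.univ (fun i => 1 - P i u (x i))
      (fun i => 1 - P i u (y i)) (fun i => hq0 i u (x i)) (fun i => hq0 i u (y i))
    have h1 : ∏ i, (1 - P i u ((x ⊔ y) i)) =
        ∏ i, min (1 - P i u (x i)) (1 - P i u (y i)) := by
      apply Finset.prod_congr rfl
      intro i _
      rcases le_total (x i) (y i) with h | h
      · rw [min_eq_right (by linarith [hPmono i u h]), show (x ⊔ y) i = y i from
          sup_eq_right.mpr h ▸ rfl]
      · rw [min_eq_left (by linarith [hPmono i u h]), show (x ⊔ y) i = x i from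
          sup_eq_left.mpr h ▸ rfl]
    have h2 : ∏ i, (1 - P i u ((x ⊓ y) i)) =
        ∏ i, max (1 - P i u (x i)) (1 - P i u (y i)) := by
      apply Finset.prod_congr rfl
      intro i _
      rcases le_total (x i) (y i) with h | h
      · rw [max_eq_left (by linarith [hPmono i u h]), show (x ⊓ y) i = x i from
          inf_eq_left.mpr h ▸ rfl]
      · rw [max_eq_right (by linarith [hPmono i u h]), show (x ⊓ y) i = y i from
          inf_eq_right.mpr h ▸ rfl]
    rw [h1, h2]
    linarith
end

section
/- Let m be a positive integer, V a finite set, σ : V → ℝ with σ_u ≥ 0 for all u, and for each i ∈ Fin m and u ∈ V let P_{i,u} : ℕ → ℝ satisfy: P_{i,u}(0) = 0, 0 ≤ P_{i,u}(k) ≤ 1 for all k, P_{i,u} is nondecreasing, and its increments are nonincreasing, i.e., P_{i,u}(k+2) − P_{i,u}(k+1) ≤ P_{i,u}(k+1) − P_{i,u}(k) for all k ∈ ℕ. Define r : (Fin m → ℕ) → ℝ by r(k) = Σ_{u∈V} σ_u (1 − Π_{i∈Fin m} (1 − P_{i,u}(k_i))). Then r is monotone and DR-submodular: for all x ≤ y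 (coordinatewise) and every i ∈ Fin m, r(y + χ_i) − r(y) ≤ r(x + χ_i) − r(x), where χ_i denotes the indicator vector of coordinate i. -/
/-- If each `P_{i,u}` vanishes at 0, is `[0,1]`-valued,
nondecreasing and has nonincreasing increments, then the reward
`r k = Σ_u σ_u (1 − Π_i (1 − P_{i,u}(k_i)))` is monotone and DR-submodular. -/
theorem stmt_3 (m : ℕ) (hm : 0 < m) (V : Type*) [Fintype V]
    (σ : V → ℝ) (hσ : ∀ u, 0 ≤ σ u)
    (P : Fin m → V → ℕ → ℝ)
    (hP0 : ∀ i u, P i u 0 = 0)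
    (hPbd : ∀ i u k, 0 ≤ P i u k ∧ P i u k ≤ 1)
    (hPmono : ∀ i u, Monotone (P i u))
    (hPconc : ∀ i u k, P i u (k + 2) - P i u (k + 1) ≤ P i u (k + 1) - P i u k)
    (r : (Fin m → ℕ) → ℝ)
    (hr : ∀ k, r k = ∑ u, σ u * (1 - ∏ i, (1 - P i u (k i)))) :
    Monotone r ∧ ∀ x y : Fin m → ℕ, x ≤ y → ∀ i : Fin m,
      r (y + Pi.single i 1) - r y ≤ r (x + Pi.single i 1) - r x := by
  have hg0 : ∀ i u k, 0 ≤ 1 - P i u k := fun i u k => by linarith [(hPbd i u k).2]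
  -- increments are nonincreasing along ℕ
  have hincd : ∀ i u a d, P i u (a + d + 1) - P i u (a + d) ≤ P i u (a + 1) - P i u a := by
    intro i u a d
    induction d with
    | zero => simp
    | succ n ih =>
      simp only [show a + (n + 1) + 1 = a + n + 2 from rfl,
        show a + (n + 1) = a + n + 1 from rfl]
      linarith [hPconc i u (a + n)]
  have hinc : ∀ i u a b, a ≤ b → P i u (b + 1) - P i u b ≤ P i u (a + 1) - P i u a := by
    intro i u a b hab
    obtain ⟨d, rfl⟩ := Nat.exists_eq_add_of_le hab
    exact hincd i u a d
  constructor
  · intro x y hxy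
    rw [hr x, hr y]
    apply Finset.sum_le_sum
    intro u _
    have hprod : ∏ i, (1 - P i u (y i)) ≤ ∏ i, (1 - P i u (x i)) :=
      Finset.prod_le_prod (fun i _ => hg0 i u (y i))
        (fun i _ => by have := hPmono i u (hxy i); linarith)
    have := hσ u
    nlinarith
  · intro x y hxy i
    rw [hr, hr, hr, hr, ← Finset.sum_sub_distrib, ← Finset.sum_sub_distrib]
    apply Finset.sum_le_sum
    intro u _
    -- rewrite products splitting out coordinate i
    have key : ∀ z : Fin m → ℕ,
        (∏ j, (1 - P j u ((z + Pi.single i 1 : Fin m → ℕ) j))) =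
          (1 - P i u (z i + 1)) * ∏ j ∈ Finset.univ.erase i, (1 - P j u (z j)) := by
      intro z
      rw [← Finset.mul_prod_erase Finset.univ _ (Finset.mem_univ i)]
      congr 1
      · simp [Pi.add_apply, Pi.single_eq_same]
      · apply Finset.prod_congr rfl
        intro j hj
        have hji : j ≠ i := Finset.ne_of_mem_erase hj
        simp [Pi.add_apply, Pi.single_eq_of_ne hji]
    have split : ∀ z : Fin m → ℕ,
        (∏ j, (1 - P j u (z j))) =
          (1 - P i u (z i)) * ∏ j ∈ Finset.univ.erase i, (1 - P j u (z j)) := by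
      intro z
      rw [← Finset.mul_prod_erase Finset.univ _ (Finset.mem_univ i)]
    rw [key y, key x, split y, split x]
    set Ty := ∏ j ∈ Finset.univ.erase i, (1 - P j u (y j)) with hTy
    set Tx := ∏ j ∈ Finset.univ.erase i, (1 - P j u (x j)) with hTx
    have hTy0 : 0 ≤ Ty := Finset.prod_nonneg (fun j _ => hg0 j u (y j))
    have hTyx : Ty ≤ Tx :=
      Finset.prod_le_prod (fun j _ => hg0 j u (y j))
        (fun j _ => by have := hPmono j u (hxy j); linarith)
    have hΔy0 : 0 ≤ P i u (y i + 1) - P i u (y i) := by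
      have := hPmono i u (Nat.le_succ (y i)); linarith
    have hΔ : P i u (y i + 1) - P i u (y i) ≤ P i u (x i + 1) - P i u (x i) :=
      hinc i u (x i) (y i) (hxy i)
    have hΔx0 : 0 ≤ P i u (x i + 1) - P i u (x i) := le_trans hΔy0 hΔ
    have hmul : (P i u (y i + 1) - P i u (y i)) * Ty ≤
        (P i u (x i + 1) - P i u (x i)) * Tx :=
      mul_le_mul hΔ hTyx hTy0 hΔx0
    have := mul_le_mul_of_nonneg_left hmul (hσ u)
    ring_nf
    ring_nf at this
    linarith
end

section
/- Let m be a positive integer. A function f : (Fin m → ℕ) → ℝ is submodular over the integer lattice (i.e., f(x ⊔ y) + f(x ⊓ y) ≤ f(x) + f(y) for all x, y) if and only if for all x ∈ (Fin m → ℕ) and all i ≠ j in Fin m, f(x + χ_i) − f(x) ≥ f(x + χ_j + χ_i) − f(x + χ_j), where χ_i denotes the one-hot vector with 1 in coordinate i and 0 elsewhere. -/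
private lemma lemA {m : ℕ} (f : (Fin m → ℕ) → ℝ)
    (hloc : ∀ (x : Fin m → ℕ) (i j : Fin m), i ≠ j →
        f (x + Pi.single j 1 + Pi.single i 1) - f (x + Pi.single j 1) ≤
          f (x + Pi.single i 1) - f x) (i : Fin m) :
    ∀ (n : ℕ) (x v : Fin m → ℕ), (∑ j, v j) = n → v i = 0 →
      f (x + v + Pi.single i 1) - f (x + v) ≤ f (x + Pi.single i 1) - f x := by
  intro n
  induction n with
  | zero =>
    intro x v hs _
    have hv : v = 0 := by
      funext k
      have := (Finset.sum_eq_zero_iff.mp hs) k (Finset.mem_univ k)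
      simpa using this
    simp [hv]
  | succ n ih =>
    intro x v hs hvi
    obtain ⟨j, hj⟩ : ∃ j, 0 < v j := by
      by_contra h
      push_neg at h
      have : (∑ j, v j) = 0 := Finset.sum_eq_zero fun k _ => Nat.le_zero.mp (h k)
      omega
    have hji : j ≠ i := fun h => by subst h; omega
    set v' : Fin m → ℕ := v - Pi.single j 1 with hv'def
    have hv' : v = v' + Pi.single j 1 := by
      funext k
      by_cases hk : k = j
      · subst hk; simp [hv'def, Pi.single_apply]; omega
      · simp [hv'def, Pi.single_apply, hk]
    have hsum' : (∑ k, v' k) = n := by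
      have : (∑ k, v k) = (∑ k, v' k) + 1 := by
        rw [hv']
        simp only [Pi.add_apply]
        rw [Finset.sum_add_distrib]
        simp
      omega
    have hvi' : v' i = 0 := by
      simp [hv'def, Pi.single_apply, hji]
      omega
    have hxv : x + v = (x + v') + Pi.single j 1 := by rw [hv']; abel
    calc f (x + v + Pi.single i 1) - f (x + v)
        = f ((x + v') + Pi.single j 1 + Pi.single i 1) - f ((x + v') + Pi.single j 1) := by
          rw [hxv]
      _ ≤ f ((x + v') + Pi.single i 1) - f (x + v') := hloc (x + v') i j hji.symm
      _ ≤ f (x + Pi.single i 1) - f x := ih x v' hsum' hvi'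

private lemma lemB {m : ℕ} (f : (Fin m → ℕ) → ℝ)
    (hloc : ∀ (x : Fin m → ℕ) (i j : Fin m), i ≠ j →
        f (x + Pi.single j 1 + Pi.single i 1) - f (x + Pi.single j 1) ≤
          f (x + Pi.single i 1) - f x) :
    ∀ (n : ℕ) (a u v : Fin m → ℕ), (∑ k, u k) = n → (∀ k, u k = 0 ∨ v k = 0) →
      f (a + u + v) + f a ≤ f (a + u) + f (a + v) := by
  intro n
  induction n with
  | zero =>
    intro a u v hs _
    have hu : u = 0 := by
      funext k
      have := (Finset.sum_eq_zero_iff.mp hs) k (Finset.mem_univ k)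
      simpa using this
    simp [hu]
    linarith
  | succ n ih =>
    intro a u v hs hdisj
    obtain ⟨i, hi⟩ : ∃ i, 0 < u i := by
      by_contra h
      push_neg at h
      have : (∑ k, u k) = 0 := Finset.sum_eq_zero fun k _ => Nat.le_zero.mp (h k)
      omega
    set u' : Fin m → ℕ := u - Pi.single i 1 with hu'def
    have hu' : u = u' + Pi.single i 1 := by
      funext k
      by_cases hk : k = i
      · subst hk; simp [hu'def, Pi.single_apply]; omega
      · simp [hu'def, Pi.single_apply, hk]
    have hsum' : (∑ k, u' k) = n := by
      have : (∑ k, u k) = (∑ k, u' k) + 1 := by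
        rw [hu']
        simp only [Pi.add_apply]
        rw [Finset.sum_add_distrib]
        simp
      omega
    have hvi : v i = 0 := by
      rcases hdisj i with h | h
      · omega
      · exact h
    have hdisj' : ∀ k, u' k = 0 ∨ v k = 0 := by
      intro k
      rcases hdisj k with h | h
      · left; simp [hu'def, h]
      · right; exact h
    have hA := lemA f hloc i (∑ k, v k) (a + u') v rfl hvi
    have hIH := ih a u' v hsum' hdisj'
    have e1 : a + u + v = a + u' + v + Pi.single i 1 := by rw [hu']; abel
    have e2 : a + u = a + u' + Pi.single i 1 := by rw [hu']; abel
    rw [e1, e2]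
    linarith

/-- Local characterization of lattice submodularity:
`f` is submodular over the integer lattice iff
`f(x + χ_i) − f(x) ≥ f(x + χ_j + χ_i) − f(x + χ_j)` for all `x` and `i ≠ j`. -/
theorem stmt_4 (m : ℕ) (hm : 0 < m) (f : (Fin m → ℕ) → ℝ) :
    (∀ x y : Fin m → ℕ, f (x ⊔ y) + f (x ⊓ y) ≤ f x + f y) ↔
      (∀ (x : Fin m → ℕ) (i j : Fin m), i ≠ j →
        f (x + Pi.single j 1 + Pi.single i 1) - f (x + Pi.single j 1) ≤
          f (x + Pi.single i 1) - f x) := by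
  constructor
  · intro hsub x i j hij
    have hsup : (x + Pi.single i 1) ⊔ (x + Pi.single j 1) = x + Pi.single j 1 + Pi.single i 1 := by
      funext k
      simp only [Pi.sup_apply, Pi.add_apply, Pi.single_apply]
      by_cases hki : k = i <;> by_cases hkj : k = j <;>
        simp_all <;> omega
    have hinf : (x + Pi.single i 1) ⊓ (x + Pi.single j 1) = x := by
      funext k
      simp only [Pi.inf_apply, Pi.add_apply, Pi.single_apply]
      by_cases hki : k = i <;> by_cases hkj : k = j <;>
        simp_all <;> omega
    have := hsub (x + Pi.single i 1) (x + Pi.single j 1)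
    rw [hsup, hinf] at this
    linarith
  · intro hloc x y
    set a : Fin m → ℕ := x ⊓ y with ha
    set u : Fin m → ℕ := x - a with hu
    set v : Fin m → ℕ := y - a with hv
    have hxa : x = a + u := by
      funext k
      simp only [hu, ha, Pi.add_apply, Pi.sub_apply, Pi.inf_apply]
      omega
    have hya : y = a + v := by
      funext k
      simp only [hv, ha, Pi.add_apply, Pi.sub_apply, Pi.inf_apply]
      omega
    have hsupv : x ⊔ y = a + u + v := by
      funext k
      simp only [hu, hv, ha, Pi.add_apply, Pi.sub_apply, Pi.sup_apply, Pi.inf_apply]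
      omega
    have hdisj : ∀ k, u k = 0 ∨ v k = 0 := by
      intro k
      simp only [hu, hv, ha, Pi.sub_apply, Pi.inf_apply]
      omega
    have := lemB f hloc (∑ k, u k) a u v rfl hdisj
    rw [hsupv]
    calc f (a + u + v) + f a ≤ f (a + u) + f (a + v) := this
      _ = f x + f y := by rw [← hxa, ← hya]
end

section
/- Let m be a positive integer and f : (Fin m → ℕ) → ℝ be submodular over the integer lattice. Then for all x, y ∈ (Fin m → ℕ), f(x ⊔ y) ≤ f(x) + Σ_{i : y_i > x_i} ( f(x + (y_i − x_i)·χ_i) − f(x) ), where the sum ranges over coordinates i ∈ Fin m with y_i > x_i, χ_i denotes the one-hot vector of coordinate i, and ⊔ denotes the coordinatewise maximum. -/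
lemma aux_decomp (m : ℕ) (f : (Fin m → ℕ) → ℝ)
    (hsub : ∀ x y : Fin m → ℕ, f (x ⊔ y) + f (x ⊓ y) ≤ f x + f y)
    (x : Fin m → ℕ) (d : Fin m → ℕ) :
    ∀ S : Finset (Fin m),
      f (x + ∑ i ∈ S, Pi.single i (d i)) ≤
        f x + ∑ i ∈ S, (f (x + Pi.single i (d i)) - f x) := by
  intro S
  induction S using Finset.induction with
  | empty => simp
  | @insert j S hj ih =>
    rw [Finset.sum_insert hj, Finset.sum_insert hj]
    set a : Fin m → ℕ := x + ∑ i ∈ S, Pi.single i (d i) with ha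
    set b : Fin m → ℕ := x + Pi.single j (d j) with hb
    have hsupp : ∀ k, k ∉ S → (∑ i ∈ S, Pi.single i (d i)) k = 0 := by
      intro k hk
      rw [Finset.sum_apply]
      exact Finset.sum_eq_zero fun i hi => Pi.single_eq_of_ne (by rintro rfl; exact hk hi) _
    have hsup : a ⊔ b = x + (Pi.single j (d j) + ∑ i ∈ S, Pi.single i (d i)) := by
      funext k
      simp only [Pi.sup_apply, Pi.add_apply, ha, hb]
      by_cases hk : k = j
      · subst hk
        rw [hsupp k hj, Pi.single_eq_same]
        omega
      · rw [Pi.single_eq_of_ne hk]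
        omega
    have hinf : a ⊓ b = x := by
      funext k
      simp only [Pi.inf_apply, Pi.add_apply, ha, hb]
      by_cases hk : k = j
      · subst hk
        rw [hsupp k hj, Pi.single_eq_same]
        omega
      · rw [Pi.single_eq_of_ne hk]
        omega
    have h := hsub a b
    rw [hsup, hinf] at h
    have := ih
    linarith
/-- decomposition lemma for lattice-submodular functions:
`f(x ⊔ y) ≤ f(x) + Σ_{i : y_i > x_i} (f(x + (y_i − x_i)·χ_i) − f(x))`. -/
theorem stmt_6 (m : ℕ) (hm : 0 < m) (f : (Fin m → ℕ) → ℝ)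
    (hsub : ∀ x y : Fin m → ℕ, f (x ⊔ y) + f (x ⊓ y) ≤ f x + f y)
    (x y : Fin m → ℕ) :
    f (x ⊔ y) ≤ f x +
      ∑ i ∈ Finset.univ.filter (fun i => x i < y i),
        (f (x + Pi.single i (y i - x i)) - f x) := by
  have key := aux_decomp m f hsub x (fun i => y i - x i)
    (Finset.univ.filter (fun i => x i < y i))
  have heq : x ⊔ y = x + ∑ i ∈ Finset.univ.filter (fun i => x i < y i),
      Pi.single i (y i - x i) := by
    funext k
    simp only [Pi.sup_apply, Pi.add_apply, Finset.sum_apply]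
    by_cases hk : x k < y k
    · rw [Finset.sum_eq_single k]
      · rw [Pi.single_eq_same]; omega
      · intro i hi hik
        exact Pi.single_eq_of_ne (M := fun _ => ℕ) hik.symm (y i - x i)
      · intro h
        exact absurd (Finset.mem_filter.mpr ⟨Finset.mem_univ k, hk⟩) h
    · rw [Finset.sum_eq_zero]
      · omega
      · intro i hi
        rcases eq_or_ne i k with rfl | hik
        · exact absurd (Finset.mem_filter.mp hi).2 hk
        · exact Pi.single_eq_of_ne (M := fun _ => ℕ) hik.symm (y i - x i)
  rw [heq]
  exact key
end

section
/- Let m be a positive integer and f : (Fin m → ℕ) → ℝ be monotone and submodular over the integer lattice. Let x, y ∈ (Fin m → ℕ) and let δ ≥ 0 be a real number such that for every coordinate i ∈ Fin m with y_i > x_i, f(x + (y_i − x_i)·χ_i) − f(x) ≤ (y_i − x_i)·δ. Then f(y) ≤ f(x) + (Σ_{i : y_i > x_i} (y_i − x_i)) · δ. -/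
/-- per-unit marginal-gain bound for monotone lattice-submodular
functions: if each single-coordinate jump from `x` towards `y` has per-unit
gain at most `δ`, then `f(y) ≤ f(x) + (Σ_{i : y_i > x_i} (y_i − x_i)) · δ`. -/
theorem stmt_8 (m : ℕ) (hm : 0 < m) (f : (Fin m → ℕ) → ℝ)
    (hmono : Monotone f)
    (hsub : ∀ x y : Fin m → ℕ, f (x ⊔ y) + f (x ⊓ y) ≤ f x + f y)
    (x y : Fin m → ℕ) (δ : ℝ) (hδ : 0 ≤ δ)
    (h : ∀ i : Fin m, x i < y i →
      f (x + Pi.single i (y i - x i)) - f x ≤ ((y i - x i : ℕ) : ℝ) * δ) :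
    f y ≤ f x +
      (∑ i ∈ Finset.univ.filter (fun i => x i < y i), ((y i - x i : ℕ) : ℝ)) * δ := by
  set z : Finset (Fin m) → (Fin m → ℕ) :=
    fun S i => if i ∈ S then max (x i) (y i) else x i with hz
  have key : ∀ S : Finset (Fin m),
      f (z S) ≤ f x + ∑ i ∈ S.filter (fun i => x i < y i),
        (f (x + Pi.single i (y i - x i)) - f x) := by
    intro S
    induction S using Finset.induction_on with
    | empty => simp [hz]
    | @insert a S ha ih =>
      by_cases hxy : x a < y a
      · set v : Fin m → ℕ := x + Pi.single a (y a - x a) with hv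
        have hva : v a = y a := by
          simp [hv, Pi.single_eq_same, Nat.add_sub_cancel' hxy.le]
        have hvi : ∀ i, i ≠ a → v i = x i := by
          intro i hi; simp [hv, Pi.single_eq_of_ne hi]
        have hsup : z S ⊔ v = z (insert a S) := by
          funext i
          by_cases hia : i = a
          · subst hia
            simp [Pi.sup_apply, hz, ha, hva]
          · simp only [Pi.sup_apply, hz, hvi i hia, Finset.mem_insert, hia, false_or]
            split <;> omega
        have hinf : z S ⊓ v = x := by
          funext i
          by_cases hia : i = a
          · subst hia
            simp [Pi.inf_apply, hz, ha, hva]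
            omega
          · simp only [Pi.inf_apply, hz, hvi i hia]
            split <;> omega
        have hs := hsub (z S) v
        rw [hsup, hinf] at hs
        have step : f (z (insert a S)) ≤ f (z S) + (f v - f x) := by linarith
        have hfilt : (insert a S).filter (fun i => x i < y i)
            = insert a (S.filter (fun i => x i < y i)) := by
          rw [Finset.filter_insert, if_pos hxy]
        rw [hfilt, Finset.sum_insert (by simp [ha])]
        linarith
      · have hzz : z (insert a S) = z S := by
          funext i
          by_cases hia : i = a
          · subst hia
            simp [hz, ha]
            omega
          · simp [hz, Finset.mem_insert, hia]
        have hfilt : (insert a S).filter (fun i => x i < y i)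
            = S.filter (fun i => x i < y i) := by
          rw [Finset.filter_insert, if_neg hxy]
        rw [hzz, hfilt]; exact ih
  have h1 : f y ≤ f (z Finset.univ) := by
    apply hmono
    intro i
    simp [hz]
  have h2 := key Finset.univ
  have h3 : ∑ i ∈ Finset.univ.filter (fun i => x i < y i),
      (f (x + Pi.single i (y i - x i)) - f x)
      ≤ ∑ i ∈ Finset.univ.filter (fun i => x i < y i), ((y i - x i : ℕ) : ℝ) * δ := by
    apply Finset.sum_le_sum
    intro i hi
    exact h i (Finset.mem_filter.mp hi).2
  rw [Finset.sum_mul] at *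
  linarith
end

section
/- Let B > 0 and η ∈ [0,1] be real numbers, r* ≥ 0, and let b_1, …, b_s be real numbers with 0 < b_j ≤ B for each j and Σ_{j=1}^{s} b_j ≥ η·B. Let r_1, …, r_{s+1} be real numbers with r_1 = 0 and r_{j+1} ≥ (1 − b_j/B)·r_j + (b_j/B)·r* for every j = 1, …, s. Then r_{s+1} ≥ (1 − e^{−η})·r*. -/
/-- Case 1 of the approximation analysis of the budget-effective
greedy algorithm: starting from reward 0, with recursive greedy improvement and
greedy budgets summing to at least `η·B`, the final reward is at least
`(1 − e^{−η})·r*`. -/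
theorem stmt_12 (B η : ℝ) (hB : 0 < B) (hη : η ∈ Set.Icc (0 : ℝ) 1)
    (rstar : ℝ) (hrstar : 0 ≤ rstar) (s : ℕ)
    (b r : ℕ → ℝ)
    (hb : ∀ j ∈ Finset.Icc 1 s, 0 < b j ∧ b j ≤ B)
    (hsum : η * B ≤ ∑ j ∈ Finset.Icc 1 s, b j)
    (hr1 : r 1 = 0)
    (hrec : ∀ j ∈ Finset.Icc 1 s,
      (1 - b j / B) * r j + (b j / B) * rstar ≤ r (j + 1)) :
    (1 - Real.exp (-η)) * rstar ≤ r (s + 1) := by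
  set P : ℕ → ℝ := fun j => ∏ i ∈ Finset.Icc 1 j, (1 - b i / B) with hP
  have key : ∀ j ≤ s, (1 - P j) * rstar ≤ r (j + 1) := by
    intro j
    induction j with
    | zero =>
      intro _
      simp [hP, hr1]
    | succ k ih =>
      intro hks
      have hk : k ≤ s := Nat.le_of_succ_le hks
      have hmem : k + 1 ∈ Finset.Icc 1 s := Finset.mem_Icc.mpr ⟨Nat.succ_le_succ (Nat.zero_le k), hks⟩
      have hbk := hb (k + 1) hmem
      have h1 : 0 ≤ 1 - b (k + 1) / B := by
        have := (div_le_one hB).mpr hbk.2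
        linarith
      have hrec' := hrec (k + 1) hmem
      have step : (1 - b (k + 1) / B) * ((1 - P k) * rstar) + (b (k + 1) / B) * rstar ≤ r (k + 2) := by
        calc (1 - b (k + 1) / B) * ((1 - P k) * rstar) + (b (k + 1) / B) * rstar
            ≤ (1 - b (k + 1) / B) * r (k + 1) + (b (k + 1) / B) * rstar := by
              gcongr
              exact ih hk
          _ ≤ r (k + 2) := hrec'
      have hPsucc : P (k + 1) = P k * (1 - b (k + 1) / B) := by
        simp [hP, Finset.prod_Icc_succ_top (Nat.succ_le_succ (Nat.zero_le k))]
      have : (1 - P (k + 1)) * rstar = (1 - b (k + 1) / B) * ((1 - P k) * rstar) + (b (k + 1) / B) * rstar := by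
        rw [hPsucc]; ring
      rw [this]
      exact step
  have hPle : P s ≤ Real.exp (-η) := by
    have h1 : P s ≤ ∏ i ∈ Finset.Icc 1 s, Real.exp (-(b i / B)) := by
      apply Finset.prod_le_prod
      · intro i hi
        have := (div_le_one hB).mpr (hb i hi).2
        linarith
      · intro i hi
        have := Real.add_one_le_exp (-(b i / B))
        linarith
    rw [← Real.exp_sum] at h1
    refine h1.trans (Real.exp_le_exp.mpr ?_)
    have : η ≤ (∑ j ∈ Finset.Icc 1 s, b j) / B := by
      rw [le_div_iff₀ hB]; linarith
    have hsum' : ∑ x ∈ Finset.Icc 1 s, -(b x / B) = -((∑ j ∈ Finset.Icc 1 s, b j) / B) := by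
      rw [Finset.sum_div, ← Finset.sum_neg_distrib]
    rw [hsum']
    linarith
  calc (1 - Real.exp (-η)) * rstar ≤ (1 - P s) * rstar := mul_le_mul_of_nonneg_right (by linarith) hrstar
    _ ≤ r (s + 1) := key s le_rfl
end

section
/- Let m be a positive integer, V a finite set, and let σ, σ' : V → ℝ and μ, μ' : Fin m → V → ℕ → ℝ all take values in [0,1]. Then for every k ∈ (Fin m → ℕ), | Σ_{u∈V} σ_u (1 − Π_{i∈Fin m} (1 − μ_{i,u}(k_i))) − Σ_{u∈V} σ'_u (1 − Π_{i∈Fin m} (1 − μ'_{i,u}(k_i))) | ≤ Σ_{i∈Fin m} Σ_{u∈V} ( σ_u · |μ_{i,u}(k_i) − μ'_{i,u}(k_i)| + |σ_u − σ'_u| · μ'_{i,u}(k_i) ). -/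
lemma aux_prod_sub (ι : Type*) [DecidableEq ι] (s : Finset ι) (f g : ι → ℝ)
    (hf : ∀ i ∈ s, 0 ≤ f i ∧ f i ≤ 1) (hg : ∀ i ∈ s, 0 ≤ g i ∧ g i ≤ 1) :
    |∏ i ∈ s, f i - ∏ i ∈ s, g i| ≤ ∑ i ∈ s, |f i - g i| := by
  induction s using Finset.induction with
  | empty => simp
  | @insert a s ha ih =>
    simp only [Finset.prod_insert ha, Finset.sum_insert ha]
    have hfs : ∀ i ∈ s, 0 ≤ f i ∧ f i ≤ 1 := fun i hi => hf i (Finset.mem_insert_of_mem hi)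
    have hgs : ∀ i ∈ s, 0 ≤ g i ∧ g i ≤ 1 := fun i hi => hg i (Finset.mem_insert_of_mem hi)
    have hfa := hf a (Finset.mem_insert_self a s)
    have hga := hg a (Finset.mem_insert_self a s)
    have hP : |∏ i ∈ s, g i| ≤ 1 := by
      rw [abs_of_nonneg (Finset.prod_nonneg fun i hi => (hgs i hi).1)]
      exact Finset.prod_le_one (fun i hi => (hgs i hi).1) (fun i hi => (hgs i hi).2)
    calc |f a * ∏ i ∈ s, f i - g a * ∏ i ∈ s, g i|
        = |f a * (∏ i ∈ s, f i - ∏ i ∈ s, g i) + (f a - g a) * ∏ i ∈ s, g i| := by ring_nf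
      _ ≤ |f a * (∏ i ∈ s, f i - ∏ i ∈ s, g i)| + |(f a - g a) * ∏ i ∈ s, g i| := abs_add_le _ _
      _ ≤ 1 * |∏ i ∈ s, f i - ∏ i ∈ s, g i| + |f a - g a| * 1 := by
          rw [abs_mul, abs_mul]
          have h1 : |f a| ≤ 1 := by rw [abs_of_nonneg hfa.1]; exact hfa.2
          exact add_le_add (mul_le_mul_of_nonneg_right h1 (abs_nonneg _))
            (mul_le_mul_of_nonneg_left hP (abs_nonneg _))
      _ ≤ |f a - g a| + ∑ i ∈ s, |f i - g i| := by
          have := ih hfs hgs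
          linarith
lemma aux_union_bound (ι : Type*) [DecidableEq ι] (s : Finset ι) (x : ι → ℝ)
    (hx : ∀ i ∈ s, 0 ≤ x i ∧ x i ≤ 1) :
    1 - ∏ i ∈ s, (1 - x i) ≤ ∑ i ∈ s, x i := by
  induction s using Finset.induction with
  | empty => simp
  | @insert a s ha ih =>
    simp only [Finset.prod_insert ha, Finset.sum_insert ha]
    have hxs : ∀ i ∈ s, 0 ≤ x i ∧ x i ≤ 1 := fun i hi => hx i (Finset.mem_insert_of_mem hi)
    have hxa := hx a (Finset.mem_insert_self a s)
    have hP0 : 0 ≤ ∏ i ∈ s, (1 - x i) :=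
      Finset.prod_nonneg fun i hi => by linarith [(hxs i hi).2]
    have hP1 : ∏ i ∈ s, (1 - x i) ≤ 1 :=
      Finset.prod_le_one (fun i hi => by linarith [(hxs i hi).2])
        (fun i hi => by linarith [(hxs i hi).1])
    have := ih hxs
    nlinarith

/-- Property 2, 1-Norm Bounded Smoothness of the reward. -/
theorem stmt_14 (m : ℕ) (hm : 0 < m) (V : Type*) [Fintype V]
    (σ σ' : V → ℝ) (μ μ' : Fin m → V → ℕ → ℝ)
    (hσ : ∀ u, 0 ≤ σ u ∧ σ u ≤ 1) (hσ' : ∀ u, 0 ≤ σ' u ∧ σ' u ≤ 1)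
    (hμ : ∀ i u b, 0 ≤ μ i u b ∧ μ i u b ≤ 1)
    (hμ' : ∀ i u b, 0 ≤ μ' i u b ∧ μ' i u b ≤ 1)
    (k : Fin m → ℕ) :
    |∑ u, σ u * (1 - ∏ i, (1 - μ i u (k i))) -
        ∑ u, σ' u * (1 - ∏ i, (1 - μ' i u (k i)))| ≤
      ∑ i : Fin m, ∑ u : V,
        (σ u * |μ i u (k i) - μ' i u (k i)| + |σ u - σ' u| * μ' i u (k i)) := by
  rw [Finset.sum_comm, ← Finset.sum_sub_distrib]
  calc |∑ u, (σ u * (1 - ∏ i, (1 - μ i u (k i))) - σ' u * (1 - ∏ i, (1 - μ' i u (k i))))|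
      ≤ ∑ u, |σ u * (1 - ∏ i, (1 - μ i u (k i))) - σ' u * (1 - ∏ i, (1 - μ' i u (k i)))| :=
        Finset.abs_sum_le_sum_abs _ _
    _ ≤ ∑ u, ∑ i, (σ u * |μ i u (k i) - μ' i u (k i)| + |σ u - σ' u| * μ' i u (k i)) := by
        apply Finset.sum_le_sum
        intro u _
        set A := 1 - ∏ i, (1 - μ i u (k i)) with hA
        set A' := 1 - ∏ i, (1 - μ' i u (k i)) with hA'
        have hAA' : |A - A'| ≤ ∑ i, |μ i u (k i) - μ' i u (k i)| := by
          have : A - A' = ∏ i, (1 - μ' i u (k i)) - ∏ i, (1 - μ i u (k i)) := by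
            rw [hA, hA']; ring
          rw [this]
          calc |∏ i, (1 - μ' i u (k i)) - ∏ i, (1 - μ i u (k i))|
              ≤ ∑ i, |(1 - μ' i u (k i)) - (1 - μ i u (k i))| :=
                aux_prod_sub _ _ _ _
                  (fun i _ => ⟨by linarith [(hμ' i u (k i)).2], by linarith [(hμ' i u (k i)).1]⟩)
                  (fun i _ => ⟨by linarith [(hμ i u (k i)).2], by linarith [(hμ i u (k i)).1]⟩)
            _ = ∑ i, |μ i u (k i) - μ' i u (k i)| := by
                apply Finset.sum_congr rfl; intro i _
                congr 1; ring
        have hA'0 : 0 ≤ A' := by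
          have : ∏ i, (1 - μ' i u (k i)) ≤ 1 :=
            Finset.prod_le_one (fun i _ => by linarith [(hμ' i u (k i)).2])
              (fun i _ => by linarith [(hμ' i u (k i)).1])
          rw [hA']; linarith
        have hA'le : A' ≤ ∑ i, μ' i u (k i) :=
          aux_union_bound _ _ _ (fun i _ => hμ' i u (k i))
        calc |σ u * A - σ' u * A'|
            = |σ u * (A - A') + (σ u - σ' u) * A'| := by ring_nf
          _ ≤ |σ u * (A - A')| + |(σ u - σ' u) * A'| := abs_add_le _ _
          _ = σ u * |A - A'| + |σ u - σ' u| * A' := by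
              rw [abs_mul, abs_mul, abs_of_nonneg (hσ u).1, abs_of_nonneg hA'0]
          _ ≤ σ u * (∑ i, |μ i u (k i) - μ' i u (k i)|) + |σ u - σ' u| * (∑ i, μ' i u (k i)) := by
              gcongr <;> first | exact (hσ u).1 | exact abs_nonneg _ | skip
          _ = ∑ i, (σ u * |μ i u (k i) - μ' i u (k i)| + |σ u - σ' u| * μ' i u (k i)) := by
              rw [Finset.mul_sum, Finset.mul_sum, ← Finset.sum_add_distrib]
end

section
/- Let m be a positive integer, c ∈ (Fin m → ℕ) a vector of per-layer budget constraints, B ∈ ℕ with B ≤ Σ_i c_i, and for each i ∈ Fin m let g_i : ℕ → ℝ be nonincreasing on {1, …, c_i} (i.e., g_i(b+1) ≤ g_i(b) for 1 ≤ b < c_i). Then the maximum of Σ_{i∈Fin m} Σ_{b=1}^{k_i} g_i(b) over all k ∈ (Fin m → ℕ) with k_i ≤ c_i for all i and Σ_i k_i = B equals the maximum of Σ_{(i,b)∈S} g_i(b) over all subsets S of {(i,b) : i ∈ Fin m, 1 ≤ b ≤ c_i} of cardinality B. -/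
open Finset

/-- Antitone on `[1, c]` from step-wise nonincreasing. -/
lemma aux_anti (c : ℕ) (f : ℕ → ℝ)
    (hf : ∀ b : ℕ, 1 ≤ b → b < c → f (b + 1) ≤ f b) :
    ∀ a b : ℕ, 1 ≤ a → a ≤ b → b ≤ c → f b ≤ f a := by
  intro a b ha hab hbc
  induction b with
  | zero => omega
  | succ n ih =>
    rcases Nat.lt_or_ge a (n+1) with h | h
    · have hn : 1 ≤ n := by omega
      have := hf n hn (by omega)
      have := ih (by omega) (by omega)
      linarith
    · have : a = n + 1 := by omega
      simp [this]

/-- Rearrangement: for a function nonincreasing on `[1,c]`, the sum over any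
`k`-element subset of `[1,c]` is at most the sum over `[1,k]`. -/
lemma aux_rearrange (c : ℕ) (f : ℕ → ℝ)
    (hf : ∀ a b : ℕ, 1 ≤ a → a ≤ b → b ≤ c → f b ≤ f a) :
    ∀ k : ℕ, ∀ F : Finset ℕ, F ⊆ Finset.Icc 1 c → F.card = k →
      ∑ b ∈ F, f b ≤ ∑ b ∈ Finset.Icc 1 k, f b := by
  intro k
  induction k with
  | zero =>
    intro F _ hcard
    simp [Finset.card_eq_zero.mp hcard]
  | succ n ih =>
    intro F hFsub hcard
    have hne : F.Nonempty := Finset.card_pos.mp (by omega)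
    set M := F.max' hne with hM
    have hMmem : M ∈ F := F.max'_mem hne
    have hMIcc : M ∈ Finset.Icc 1 c := hFsub hMmem
    have hM1 : 1 ≤ M := (Finset.mem_Icc.mp hMIcc).1
    have hMc : M ≤ c := (Finset.mem_Icc.mp hMIcc).2
    -- every element of F lies in Icc 1 M, so card F ≤ M
    have hsub2 : F ⊆ Finset.Icc 1 M := by
      intro x hx
      exact Finset.mem_Icc.mpr ⟨(Finset.mem_Icc.mp (hFsub hx)).1, F.le_max' x hx⟩
    have hcardM : n + 1 ≤ M := by
      have := Finset.card_le_card hsub2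
      simpa [hcard, Nat.card_Icc] using this
    have herase : (F.erase M).card = n := by
      rw [Finset.card_erase_of_mem hMmem, hcard]
      omega
    have hih := ih (F.erase M) (fun x hx => hFsub (Finset.mem_of_mem_erase hx)) herase
    have hfM : f M ≤ f (n + 1) := hf (n + 1) M (by omega) hcardM hMc
    have hsplit : ∑ b ∈ F, f b = ∑ b ∈ F.erase M, f b + f M := by
      rw [Finset.sum_erase_add F f hMmem]
    have htop : ∑ b ∈ Finset.Icc 1 (n + 1), f b
        = ∑ b ∈ Finset.Icc 1 n, f b + f (n + 1) := by
      rw [← Finset.sum_Icc_succ_top (by omega : 1 ≤ n + 1)]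
    rw [hsplit, htop]
    linarith

/-- optimality of myopic greedy for nonincreasing layer-level
marginal gains: the optimum of `Σ_i Σ_{b=1}^{k_i} g_i(b)` over feasible budget
allocations equals the optimum of `Σ_{(i,b)∈S} g_i(b)` over size-`B` subsets of
the admissible pairs. -/
theorem stmt_18 (m : ℕ) (hm : 0 < m) (c : Fin m → ℕ) (B : ℕ)
    (hB : B ≤ ∑ i, c i)
    (g : Fin m → ℕ → ℝ)
    (hg : ∀ i : Fin m, ∀ b : ℕ, 1 ≤ b → b < c i → g i (b + 1) ≤ g i b) :
    sSup {v : ℝ | ∃ k : Fin m → ℕ, (∀ i, k i ≤ c i) ∧ (∑ i, k i) = B ∧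
        v = ∑ i : Fin m, ∑ b ∈ Finset.Icc 1 (k i), g i b}
      = sSup {v : ℝ | ∃ S : Finset (Fin m × ℕ),
          (∀ p ∈ S, 1 ≤ p.2 ∧ p.2 ≤ c p.1) ∧ S.card = B ∧
          v = ∑ p ∈ S, g p.1 p.2} := by
  classical
  set L := {v : ℝ | ∃ k : Fin m → ℕ, (∀ i, k i ≤ c i) ∧ (∑ i, k i) = B ∧
      v = ∑ i : Fin m, ∑ b ∈ Finset.Icc 1 (k i), g i b} with hL
  set R := {v : ℝ | ∃ S : Finset (Fin m × ℕ),
      (∀ p ∈ S, 1 ≤ p.2 ∧ p.2 ≤ c p.1) ∧ S.card = B ∧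
      v = ∑ p ∈ S, g p.1 p.2} with hR
  -- the embedding of pairs
  have hinj : ∀ i : Fin m, Function.Injective (fun b : ℕ => ((i, b) : Fin m × ℕ)) := by
    intro i a b h
    simpa using congrArg Prod.snd h
  -- allocation ↦ set construction
  have key : ∀ k : Fin m → ℕ, (∀ i, k i ≤ c i) →
      ∃ S : Finset (Fin m × ℕ), (∀ p ∈ S, 1 ≤ p.2 ∧ p.2 ≤ c p.1) ∧
        S.card = ∑ i, k i ∧
        ∑ p ∈ S, g p.1 p.2 = ∑ i : Fin m, ∑ b ∈ Finset.Icc 1 (k i), g i b := by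
    intro k hk
    refine ⟨Finset.univ.biUnion (fun i =>
      (Finset.Icc 1 (k i)).map ⟨fun b => (i, b), hinj i⟩), ?_, ?_, ?_⟩
    · intro p hp
      simp only [Finset.mem_biUnion, Finset.mem_map, Function.Embedding.coeFn_mk,
        Finset.mem_univ, true_and] at hp
      obtain ⟨i, b, hb, rfl⟩ := hp
      have := Finset.mem_Icc.mp hb
      exact ⟨this.1, le_trans this.2 (hk i)⟩
    · rw [Finset.card_biUnion]
      · simp
      · intro x _ y _ hxy
        simp only [Finset.disjoint_left, Finset.mem_map, Function.Embedding.coeFn_mk]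
        rintro p ⟨a, _, rfl⟩ ⟨b, _, hb⟩
        have hx : y = x := congrArg Prod.fst hb
        exact hxy hx.symm
    · rw [Finset.sum_biUnion]
      · simp
      · intro x _ y _ hxy
        simp only [Finset.disjoint_left, Finset.mem_map, Function.Embedding.coeFn_mk]
        rintro p ⟨a, _, rfl⟩ ⟨b, _, hb⟩
        have hx : y = x := congrArg Prod.fst hb
        exact hxy hx.symm
  -- L ⊆ R
  have hLR : L ⊆ R := by
    rintro v ⟨k, hk, hsum, rfl⟩
    obtain ⟨S, hS1, hS2, hS3⟩ := key k hk
    exact ⟨S, hS1, by rw [hS2, hsum], hS3.symm⟩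
  -- set ↦ allocation domination
  have dom : ∀ S : Finset (Fin m × ℕ), (∀ p ∈ S, 1 ≤ p.2 ∧ p.2 ≤ c p.1) →
      ∃ k : Fin m → ℕ, (∀ i, k i ≤ c i) ∧ (∑ i, k i) = S.card ∧
        ∑ p ∈ S, g p.1 p.2 ≤ ∑ i : Fin m, ∑ b ∈ Finset.Icc 1 (k i), g i b := by
    intro S hS
    set k : Fin m → ℕ := fun i => ((S.filter (fun p => p.1 = i)).image Prod.snd).card
      with hkdef
    have hfiber : ∀ i : Fin m,
        (S.filter (fun p => p.1 = i)).image Prod.snd ⊆ Finset.Icc 1 (c i) := by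
      intro i b hb
      simp only [Finset.mem_image, Finset.mem_filter] at hb
      obtain ⟨p, ⟨hpS, hpi⟩, rfl⟩ := hb
      have := hS p hpS
      exact Finset.mem_Icc.mpr ⟨this.1, hpi ▸ this.2⟩
    have hcardfil : ∀ i : Fin m,
        ((S.filter (fun p => p.1 = i)).image Prod.snd).card
          = (S.filter (fun p => p.1 = i)).card := by
      intro i
      apply Finset.card_image_of_injOn
      intro p hp q hq hpq
      simp only [Finset.coe_filter, Set.mem_setOf_eq] at hp hq
      exact Prod.ext (hp.2.trans hq.2.symm) hpq
    refine ⟨k, ?_, ?_, ?_⟩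
    · intro i
      have := Finset.card_le_card (hfiber i)
      simpa [hkdef, Nat.card_Icc] using this
    · rw [hkdef]
      simp only [hcardfil]
      exact (Finset.card_eq_sum_card_fiberwise (f := Prod.fst) (t := Finset.univ)
        (fun p _ => Finset.mem_univ _)).symm
    · have hfibsum : ∑ p ∈ S, g p.1 p.2
          = ∑ i : Fin m, ∑ p ∈ S.filter (fun p => p.1 = i), g p.1 p.2 := by
        exact (Finset.sum_fiberwise_of_maps_to (fun p _ => Finset.mem_univ p.1) _).symm
      rw [hfibsum]
      apply Finset.sum_le_sum
      intro i _
      have himg : ∑ p ∈ S.filter (fun p => p.1 = i), g p.1 p.2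
          = ∑ b ∈ (S.filter (fun p => p.1 = i)).image Prod.snd, g i b := by
        rw [Finset.sum_image]
        · apply Finset.sum_congr rfl
          intro p hp
          have : p.1 = i := (Finset.mem_filter.mp hp).2
          rw [this]
        · intro p hp q hq hpq
          have h1 : p.1 = i := (Finset.mem_filter.mp hp).2
          have h2 : q.1 = i := (Finset.mem_filter.mp hq).2
          exact Prod.ext (h1.trans h2.symm) hpq
      rw [himg]
      exact aux_rearrange (c i) (g i)
        (aux_anti (c i) (g i) (hg i)) (k i) _ (hfiber i) rfl
  -- R values are ≤ some L value? No: dominated by an L value with same card.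
  -- nonemptiness of R
  have hTcard : (Finset.univ.biUnion (fun i : Fin m =>
      (Finset.Icc 1 (c i)).map ⟨fun b => (i, b), hinj i⟩)).card = ∑ i, c i := by
    rw [Finset.card_biUnion]
    · simp [Nat.card_Icc]
    · intro x _ y _ hxy
      simp only [Finset.disjoint_left, Finset.mem_map, Function.Embedding.coeFn_mk]
      rintro p ⟨a, _, rfl⟩ ⟨b, _, hb⟩
      have hx : y = x := congrArg Prod.fst hb
      exact hxy hx.symm
  obtain ⟨S0, hS0sub, hS0card⟩ := Finset.exists_subset_card_eq (hTcard ▸ hB)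
  have hS0mem : ∀ p ∈ S0, 1 ≤ p.2 ∧ p.2 ≤ c p.1 := by
    intro p hp
    have := hS0sub hp
    simp only [Finset.mem_biUnion, Finset.mem_map, Function.Embedding.coeFn_mk,
      Finset.mem_univ, true_and] at this
    obtain ⟨i, b, hb, rfl⟩ := this
    exact Finset.mem_Icc.mp hb
  have hRne : R.Nonempty := ⟨_, S0, hS0mem, hS0card, rfl⟩
  have hLne : L.Nonempty := by
    obtain ⟨k, hk, hksum, _⟩ := dom S0 hS0mem
    exact ⟨_, k, hk, hksum.trans hS0card, rfl⟩
  -- boundedness of R (hence of L since L ⊆ R)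
  have hRbdd : BddAbove R := by
    refine ⟨∑ p ∈ Finset.univ.biUnion (fun i : Fin m =>
      (Finset.Icc 1 (c i)).map ⟨fun b => (i, b), hinj i⟩), max (g p.1 p.2) 0, ?_⟩
    rintro v ⟨S, hS1, _, rfl⟩
    have hsub : S ⊆ Finset.univ.biUnion (fun i : Fin m =>
        (Finset.Icc 1 (c i)).map ⟨fun b => (i, b), hinj i⟩) := by
      intro p hp
      simp only [Finset.mem_biUnion, Finset.mem_map, Function.Embedding.coeFn_mk,
        Finset.mem_univ, true_and]
      exact ⟨p.1, p.2, Finset.mem_Icc.mpr (hS1 p hp), rfl⟩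
    calc ∑ p ∈ S, g p.1 p.2 ≤ ∑ p ∈ S, max (g p.1 p.2) 0 :=
          Finset.sum_le_sum (fun p _ => le_max_left _ _)
      _ ≤ _ := Finset.sum_le_sum_of_subset_of_nonneg hsub
          (fun p _ _ => le_max_right _ _)
  have hLbdd : BddAbove L := hRbdd.mono hLR
  apply le_antisymm
  · exact csSup_le_csSup hRbdd hLne hLR
  · apply csSup_le hRne
    rintro v ⟨S, hS1, hS2, rfl⟩
    obtain ⟨k, hk, hksum, hle⟩ := dom S hS1
    exact le_trans hle (le_csSup hLbdd ⟨k, hk, hksum.trans hS2, rfl⟩)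
end
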